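/- The function g(x) = ((2x-1)/x²)·log(1-x) is strictly decreasing on (0,1). -/

import Mathlib

theorem stmt10 :
    StrictAntiOn (fun x : ℝ => ((2*x - 1) / x^2) * Real.log (1 - x)) (Set.Ioo 0 1) := by
  have key : ∀ x ∈ Set.Ioo (0:ℝ) 1,
      HasDerivAt (fun x : ℝ => ((2*x - 1) / x^2) * Real.log (1 - x))
        ((2*(1-x)^2 * Real.log (1-x) - x*(2*x-1)) / (x^3*(1-x))) x := by
    intro x hx
    obtain ⟨hx0, hx1⟩ := hx
    have hx2 : x^2 ≠ 0 := pow_ne_zero _ (ne_of_gt hx0)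
    have h1x : (0:ℝ) < 1 - x := by linarith
    have hu : HasDerivAt (fun x : ℝ => (2*x - 1)/x^2)
        ((2 * x^2 - (2*x-1)*(2*x))/(x^2)^2) x := by
      have ha : HasDerivAt (fun x : ℝ => 2*x - 1) 2 x := by
        simpa using ((hasDerivAt_id x).const_mul 2).sub_const 1
      have hb : HasDerivAt (fun x : ℝ => x^2) (2*x) x := by
        simpa using hasDerivAt_pow 2 x
      exact ha.div hb hx2
    have hv : HasDerivAt (fun x : ℝ => Real.log (1 - x)) ((1-x)⁻¹ * (-1)) x := by
      have hl : HasDerivAt (fun x : ℝ => 1 - x) (-1) x := by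
        simpa using (hasDerivAt_id x).const_sub 1
      have := (Real.hasDerivAt_log (ne_of_gt h1x)).comp x hl
      exact this
    have hmul : HasDerivAt (fun y : ℝ => ((2*y - 1) / y^2) * Real.log (1 - y)) _ x := hu.mul hv
    convert hmul using 1
    have hx0' : x ≠ 0 := ne_of_gt hx0
    have h1x' : (1:ℝ) - x ≠ 0 := ne_of_gt h1x
    field_simp
    ring
  apply strictAntiOn_of_deriv_neg (convex_Ioo 0 1)
  · exact fun x hx => (key x hx).continuousAt.continuousWithinAt
  · intro x hx
    rw [interior_Ioo] at hx
    rw [(key x hx).deriv]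
    obtain ⟨hx0, hx1⟩ := hx
    have h1x : (0:ℝ) < 1 - x := by linarith
    apply div_neg_of_neg_of_pos
    · have hlog : Real.log (1 - x) ≤ -x := by
        have := Real.log_le_sub_one_of_pos h1x
        linarith
      have h2 : (0:ℝ) < 2*(1-x)^2 := by positivity
      have h3 : 2*(1-x)^2 * Real.log (1-x) ≤ 2*(1-x)^2 * (-x) :=
        mul_le_mul_of_nonneg_left hlog (le_of_lt h2)
      nlinarith [sq_nonneg (x - 1/2), sq_nonneg x]
    · positivity
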